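/- Let (Ω, F, μ) be a probability space, let Z₀, Z₁ : Ω → H be square-integrable random variables taking values in a real Hilbert space H, let m_C ≤ F be a sub-σ-algebra (generated by the text condition C), and fix t ∈ (0,1). Define the interpolated state Z_t := (1-t)•Z₀ + t•Z₁ and the target velocity U_t := Z₁ - Z₀, and let m := σ(Z_t) ⊔ m_C be the σ-algebra generated by Z_t together with m_C. Then the expected conditional variance of the velocity satisfies ∫ ‖U_t - μ[U_t | m]‖² dμ ≤ (1-t)⁻² · ∫ ‖Z₁ - μ[Z₁ | m_C]‖² dμ. That is, the irreducible conditional-variance term of flow matching E[Var(u_t | z_t, t, C)] is bounded above by (1-t)⁻² times the conditional dispersion of the endpoint E[‖z₁ - E[z₁|C]‖²]. -/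

import Mathlib

open MeasureTheory

section Aux

variable {Ω H : Type*}
  [NormedAddCommGroup H] [InnerProductSpace ℝ H] [CompleteSpace H]
  [MeasurableSpace H] [BorelSpace H]

lemma integral_norm_sq_eq_norm_sq {mΩ : MeasurableSpace Ω} {μ : Measure Ω} (h : Lp H 2 μ) :
    ∫ ω, ‖h ω‖ ^ 2 ∂μ = ‖h‖ ^ 2 :=
  calc ∫ ω, ‖h ω‖ ^ 2 ∂μ = ∫ ω, (inner ℝ (h ω) (h ω) : ℝ) ∂μ :=
        integral_congr_ae (Filter.Eventually.of_forall fun ω =>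
          (real_inner_self_eq_norm_sq _).symm)
    _ = (inner ℝ h h : ℝ) := (MeasureTheory.L2.inner_def h h).symm
    _ = ‖h‖ ^ 2 := real_inner_self_eq_norm_sq h

lemma condexp_ae_eq_condexpL2' {m mΩ : MeasurableSpace Ω} {μ : Measure Ω} (hm : m ≤ mΩ) [IsFiniteMeasure μ]
    {f : Ω → H} (hf : MemLp f 2 μ) :
    μ[f|m] =ᵐ[μ] (condExpL2 H ℝ hm (hf.toLp f) : Ω → H) := by
  refine (ae_eq_condExp_of_forall_setIntegral_eq hm (hf.integrable one_le_two)
    (fun s _ hμs => integrableOn_condExpL2_of_measure_ne_top hm hμs.ne _)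
    (fun s hs hμs => ?_) (aestronglyMeasurable_condExpL2 hm _)).symm
  rw [integral_condExpL2_eq hm (hf.toLp f) hs hμs.ne]
  exact setIntegral_congr_ae (hm s hs) (hf.coeFn_toLp.mono fun ω h _ => h)

lemma memℒp_condexp_two {m mΩ : MeasurableSpace Ω} {μ : Measure Ω} (hm : m ≤ mΩ) [IsProbabilityMeasure μ]
    {f : Ω → H} (hf : MemLp f 2 μ) : MemLp (μ[f|m]) 2 μ :=
  (Lp.memLp ((condExpL2 H ℝ hm (hf.toLp f) : lpMeas H ℝ m 2 μ) : Lp H 2 μ)).ae_eq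
    (condexp_ae_eq_condexpL2' hm hf).symm

/-- L² minimality of the conditional expectation. -/
lemma integral_norm_sq_sub_condexp_le {m mΩ : MeasurableSpace Ω} {μ : Measure Ω} (hm : m ≤ mΩ)
    [IsProbabilityMeasure μ] {f g : Ω → H} (hf : MemLp f 2 μ) (hg : MemLp g 2 μ)
    (hgm : AEStronglyMeasurable[m] g μ) :
    ∫ ω, ‖f ω - (μ[f|m]) ω‖ ^ 2 ∂μ ≤ ∫ ω, ‖f ω - g ω‖ ^ 2 ∂μ := by
  haveI : Fact (m ≤ mΩ) := ⟨hm⟩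
  set F : Lp H 2 μ := hf.toLp f with hF
  set G : Lp H 2 μ := hg.toLp g with hG
  set P : lpMeas H ℝ m 2 μ := condExpL2 H ℝ hm F with hP
  have hGmem : G ∈ lpMeas H ℝ m 2 μ :=
    mem_lpMeas_iff_aestronglyMeasurable.mpr (hgm.congr hg.coeFn_toLp.symm)
  have hproj : P = (lpMeas H ℝ m 2 μ).orthogonalProjectionOnto F := rfl
  have hnorm : ‖F - (P : Lp H 2 μ)‖ ≤ ‖F - G‖ := by
    rw [hproj, ← Submodule.starProjection_apply, Submodule.starProjection_minimal]
    refine ciInf_le ⟨0, ?_⟩ (⟨G, hGmem⟩ : lpMeas H ℝ m 2 μ)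
    rintro x ⟨y, rfl⟩
    exact norm_nonneg _
  have h1 : ∫ ω, ‖f ω - (μ[f|m]) ω‖ ^ 2 ∂μ = ‖F - (P : Lp H 2 μ)‖ ^ 2 := by
    rw [← integral_norm_sq_eq_norm_sq]
    refine integral_congr_ae ?_
    filter_upwards [hf.coeFn_toLp, condexp_ae_eq_condexpL2' hm hf,
      Lp.coeFn_sub F (P : Lp H 2 μ)] with ω e1 e2 e3
    rw [e3, Pi.sub_apply, e1, e2]
  have h2 : ∫ ω, ‖f ω - g ω‖ ^ 2 ∂μ = ‖F - G‖ ^ 2 := by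
    rw [← integral_norm_sq_eq_norm_sq]
    refine integral_congr_ae ?_
    filter_upwards [hf.coeFn_toLp, hg.coeFn_toLp, Lp.coeFn_sub F G] with ω e1 e2 e3
    rw [e3, Pi.sub_apply, e1, e2]
  rw [h1, h2]
  exact pow_le_pow_left₀ (norm_nonneg _) hnorm 2

/-- A function that is measurable w.r.t. a sub-σ-algebra and a.e. strongly measurable
is a.e. strongly measurable w.r.t. the sub-σ-algebra. -/
lemma aeStronglyMeasurable'_of_measurable' {m mΩ : MeasurableSpace Ω} {μ : Measure Ω}
    {f : Ω → H} (hfm : Measurable[m] f) (hf : AEStronglyMeasurable f μ) :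
    AEStronglyMeasurable[m] f μ := by
  obtain ⟨g, hg_sm, hfg⟩ := hf
  set s : Set H := closure (Set.range g) with hs
  have hs_sep : TopologicalSpace.IsSeparable s := hg_sm.isSeparable_range.closure
  have hs_closed : IsClosed s := isClosed_closure
  have hA : MeasurableSet[m] (f ⁻¹' s) := hfm hs_closed.measurableSet
  refine ⟨(f ⁻¹' s).indicator f, ?_, ?_⟩
  · rw [stronglyMeasurable_iff_measurable_separable]
    constructor
    · exact hfm.indicator hA
    · refine TopologicalSpace.IsSeparable.mono ?_
        (show Set.range ((f ⁻¹' s).indicator f) ⊆ insert 0 s from ?_)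
      · rw [Set.insert_eq]
        exact (Set.finite_singleton (0 : H)).isSeparable.union hs_sep
      · rintro x ⟨ω, rfl⟩
        by_cases hω : ω ∈ f ⁻¹' s
        · rw [Set.indicator_of_mem hω]
          exact Set.mem_insert_of_mem _ hω
        · rw [Set.indicator_of_notMem hω]
          exact Set.mem_insert _ _
  · filter_upwards [hfg] with ω hω
    have hmem : ω ∈ f ⁻¹' s := by
      simp only [Set.mem_preimage, hs]
      exact hω ▸ subset_closure (Set.mem_range_self ω)
    exact (Set.indicator_of_mem hmem f).symm

end Aux

/-- Endpoint-concentration bound for flow matching: for `t ∈ (0,1)`, with interpolated state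
`Z_t = (1-t)•Z₀ + t•Z₁`, target velocity `U_t = Z₁ - Z₀`, and conditioning σ-algebra
`m = σ(Z_t) ⊔ m_C`, the irreducible conditional variance of the velocity satisfies
`E‖U_t - E[U_t|m]‖² ≤ (1-t)⁻² * E‖Z₁ - E[Z₁|m_C]‖²`. -/
theorem flow_matching_irreducible_error_bound
    {Ω H : Type*} {mΩ : MeasurableSpace Ω} {μ : Measure Ω} [IsProbabilityMeasure μ]
    [NormedAddCommGroup H] [InnerProductSpace ℝ H] [CompleteSpace H]
    [MeasurableSpace H] [BorelSpace H]
    {mC : MeasurableSpace Ω} (hmC : mC ≤ mΩ)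
    {Z₀ Z₁ : Ω → H} (hZ₀ : MemLp Z₀ 2 μ) (hZ₁ : MemLp Z₁ 2 μ)
    {t : ℝ} (ht : t ∈ Set.Ioo (0 : ℝ) 1)
    (Zt Ut : Ω → H)
    (hZt : Zt = fun ω => (1 - t) • Z₀ ω + t • Z₁ ω)
    (hUt : Ut = fun ω => Z₁ ω - Z₀ ω)
    (m : MeasurableSpace Ω)
    (hmdef : m = MeasurableSpace.comap Zt inferInstance ⊔ mC)
    (hm : m ≤ mΩ) :
    ∫ ω, ‖Ut ω - (μ[Ut|m]) ω‖ ^ 2 ∂μ ≤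
      (1 - t)⁻¹ ^ 2 * ∫ ω, ‖Z₁ ω - (μ[Z₁|mC]) ω‖ ^ 2 ∂μ := by
  obtain ⟨ht0, ht1⟩ := ht
  have h1t : (0 : ℝ) < 1 - t := by linarith
  have h1t' : (1 : ℝ) - t ≠ 0 := h1t.ne'
  set c : ℝ := (1 - t)⁻¹ with hc
  have hmC_le_m : mC ≤ m := hmdef ▸ le_sup_right
  have hZt_mem : MemLp Zt 2 μ := by
    rw [hZt]; exact (hZ₀.const_smul _).add (hZ₁.const_smul _)
  have hUt_mem : MemLp Ut 2 μ := by rw [hUt]; exact hZ₁.sub hZ₀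
  have hE_mem : MemLp (μ[Z₁|mC]) 2 μ := memℒp_condexp_two hmC hZ₁
  set g : Ω → H := fun ω => c • ((μ[Z₁|mC]) ω - Zt ω) with hg
  have hg_mem : MemLp g 2 μ := (hE_mem.sub hZt_mem).const_smul c
  have hZt_measM : Measurable[m] Zt := by
    have h1 : Measurable[MeasurableSpace.comap Zt inferInstance] Zt :=
      measurable_iff_comap_le.mpr le_rfl
    exact h1.mono (hmdef ▸ le_sup_left) le_rfl
  have hZt_aesm : AEStronglyMeasurable[m] Zt μ :=
    aeStronglyMeasurable'_of_measurable' hZt_measM hZt_mem.aestronglyMeasurable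
  have hE_aesm : AEStronglyMeasurable[m] (μ[Z₁|mC]) μ :=
    (stronglyMeasurable_condExp.mono hmC_le_m).aestronglyMeasurable
  have hg_aesm : AEStronglyMeasurable[m] g μ :=
    (hE_aesm.sub hZt_aesm).const_smul c
  have key : ∀ ω, Ut ω - g ω = c • (Z₁ ω - (μ[Z₁|mC]) ω) := by
    intro ω
    simp only [hUt, hg, hZt]
    match_scalars <;> (rw [hc]; field_simp <;> ring)
  calc ∫ ω, ‖Ut ω - (μ[Ut|m]) ω‖ ^ 2 ∂μ
      ≤ ∫ ω, ‖Ut ω - g ω‖ ^ 2 ∂μ :=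
        integral_norm_sq_sub_condexp_le hm hUt_mem hg_mem hg_aesm
    _ = ∫ ω, c ^ 2 * ‖Z₁ ω - (μ[Z₁|mC]) ω‖ ^ 2 ∂μ := by
        refine integral_congr_ae (Filter.Eventually.of_forall fun ω => ?_)
        simp only [key, norm_smul, mul_pow, Real.norm_eq_abs, sq_abs]
    _ = (1 - t)⁻¹ ^ 2 * ∫ ω, ‖Z₁ ω - (μ[Z₁|mC]) ω‖ ^ 2 ∂μ := by
        rw [integral_const_mul]
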